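/- arXiv:2109.06584 — 6 statements merged into one kernel-verified Lean document; each statement's English description precedes it below -/
import Mathlib

section
/- One-step drift of the single-bit-flip non-elitist algorithm on DLB: Let n be an even positive integer. For every x ∈ {0,1}^n with x ≠ (1,…,1), let x' be the random state obtained as follows: choose i ∈ [1..n] uniformly at random and let y be x with bit i flipped; set x' = y if either (DLB(x) is even and DLB(y) > DLB(x)) or (DLB(x) is odd and DLB(y) > DLB(x) − 2), and set x' = x otherwise. Then E[HLB_{3/2}(x') − HLB_{3/2}(x)] ≥ 1/n. -/
/-- Number of leading ones among positions `0, …, n-1` of `x : ℕ → Bool`. -/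
def LOn (n : ℕ) (x : ℕ → Bool) : ℕ :=
  ((Finset.range n).filter (fun r => ∀ s ≤ r, x s = true)).card

/-- The DeceivingLeadingBlocks function (0-based encoding of bit positions):
blocks are `(x (2ℓ), x (2ℓ+1))`; if `x` is not the all-ones string and `m` is the
index of the first non-`11` block, then the value is `2m+1` for a `00` critical
block, `2m` for a `01`/`10` critical block, and `n` for the all-ones string. -/
def DLBn (n : ℕ) (x : ℕ → Bool) : ℕ :=
  if ∀ i < n, x i = true then n
  else if x (2 * (LOn n x / 2)) = false ∧ x (2 * (LOn n x / 2) + 1) = false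
    then 2 * (LOn n x / 2) + 1
    else 2 * (LOn n x / 2)

/-- The Honest Leading Blocks function with parameter `δ`:
`HLB_δ(x) = 2m` if `DLB(x) = 2m+1`, `HLB_δ(x) = 2m+2-δ` if `DLB(x) = 2m` (for
`m ∈ [0..n/2-1]`), and `HLB_δ(x) = n` if `DLB(x) = n`. -/
noncomputable def HLBn (n : ℕ) (δ : ℝ) (x : ℕ → Bool) : ℝ :=
  if ∀ i < n, x i = true then (n : ℝ)
  else if x (2 * (LOn n x / 2)) = false ∧ x (2 * (LOn n x / 2) + 1) = false
    then (2 * (LOn n x / 2) : ℕ)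
    else (2 * (LOn n x / 2) : ℕ) + 2 - δ

/-- Extend a bit string `x : Fin n → Bool` to all of `ℕ` (by `false` outside). -/
def toNatFun {n : ℕ} (x : Fin n → Bool) : ℕ → Bool :=
  fun i => if h : i < n then x ⟨i, h⟩ else false

/-- The LeadingOnes value of a bit string of length `n`. -/
def LO {n : ℕ} (x : Fin n → Bool) : ℕ := LOn n (toNatFun x)

/-- The DeceivingLeadingBlocks value of a bit string of length `n`. -/
def DLB {n : ℕ} (x : Fin n → Bool) : ℕ := DLBn n (toNatFun x)

/-- The Honest Leading Blocks value (parameter `δ`) of a bit string of length `n`. -/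
noncomputable def HLB {n : ℕ} (δ : ℝ) (x : Fin n → Bool) : ℝ := HLBn n δ (toNatFun x)

/-- One step of the single-bit-flip non-elitist algorithm on `DLB`, started at
`x`: choose a position `i` uniformly at random and let `y` be `x` with bit `i`
flipped; move to `y` if either `DLB x` is even and `DLB y > DLB x`, or `DLB x`
is odd and `DLB y > DLB x - 2`; stay at `x` otherwise. -/
noncomputable def sbfStep (n : ℕ) [NeZero n] (x : Fin n → Bool) :
    PMF (Fin n → Bool) :=
  (PMF.uniformOfFintype (Fin n)).map fun i =>
    if (Even (DLB x) ∧ DLB x < DLB (Function.update x i (!(x i)))) ∨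
        (¬ Even (DLB x) ∧
          (DLB x : ℤ) - 2 < (DLB (Function.update x i (!(x i))) : ℤ))
      then Function.update x i (!(x i)) else x


section Aux

lemma LOn_le (n : ℕ) (x : ℕ → Bool) : LOn n x ≤ n := by
  calc LOn n x ≤ (Finset.range n).card := Finset.card_filter_le _ _
  _ = n := Finset.card_range n

lemma LOn_eq {n k : ℕ} {x : ℕ → Bool} (hk : k ≤ n)
    (h1 : ∀ i < k, x i = true) (h2 : k < n → x k = false) : LOn n x = k := by
  have hset : (Finset.range n).filter (fun r => ∀ s ≤ r, x s = true) = Finset.range k := by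
    ext r
    simp only [Finset.mem_filter, Finset.mem_range]
    constructor
    · rintro ⟨hrn, hall⟩
      by_contra hr
      push_neg at hr
      have hkn : k < n := lt_of_le_of_lt hr hrn
      have := hall k hr
      rw [h2 hkn] at this
      exact absurd this (by simp)
    · intro hrk
      exact ⟨lt_of_lt_of_le hrk hk, fun s hs => h1 s (lt_of_le_of_lt hs hrk)⟩
  rw [LOn, hset, Finset.card_range]

lemma LOn_ge {n k : ℕ} {x : ℕ → Bool} (hk : k ≤ n) (h1 : ∀ i < k, x i = true) :
    k ≤ LOn n x := by
  have hsub : Finset.range k ⊆ (Finset.range n).filter (fun r => ∀ s ≤ r, x s = true) := by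
    intro r hr
    rw [Finset.mem_range] at hr
    exact Finset.mem_filter.2 ⟨Finset.mem_range.2 (lt_of_lt_of_le hr hk),
      fun s hs => h1 s (lt_of_le_of_lt hs hr)⟩
  calc k = (Finset.range k).card := (Finset.card_range k).symm
  _ ≤ _ := Finset.card_le_card hsub

lemma DLBn_eval {n ℓ : ℕ} {Y : ℕ → Bool} (hLO : LOn n Y = ℓ)
    (hne : ¬ ∀ i < n, Y i = true) :
    DLBn n Y = if Y (2*(ℓ/2)) = false ∧ Y (2*(ℓ/2)+1) = false then 2*(ℓ/2)+1 else 2*(ℓ/2) := by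
  rw [DLBn, if_neg hne, hLO]

lemma HLBn_eval {n ℓ : ℕ} {δ : ℝ} {Y : ℕ → Bool} (hLO : LOn n Y = ℓ)
    (hne : ¬ ∀ i < n, Y i = true) :
    HLBn n δ Y = if Y (2*(ℓ/2)) = false ∧ Y (2*(ℓ/2)+1) = false
      then ((2*(ℓ/2) : ℕ) : ℝ) else ((2*(ℓ/2) : ℕ) : ℝ) + 2 - δ := by
  rw [HLBn, if_neg hne, hLO]

lemma toNatFun_coe {n : ℕ} (x : Fin n → Bool) (i : Fin n) : toNatFun x (i : ℕ) = x i := by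
  simp [toNatFun, i.isLt]

lemma toNatFun_update {n : ℕ} (x : Fin n → Bool) (i : Fin n) (b : Bool) :
    toNatFun (Function.update x i b) = Function.update (toNatFun x) (i : ℕ) b := by
  funext j
  rcases eq_or_ne j (i : ℕ) with rfl | hij
  · rw [Function.update_self]
    simp [toNatFun, i.isLt]
  · rw [Function.update_of_ne hij]
    by_cases hj : j < n
    · have : (⟨j, hj⟩ : Fin n) ≠ i := fun h => hij (by simpa using congrArg Fin.val h)
      simp [toNatFun, hj, Function.update_of_ne this]
    · simp [toNatFun, hj]

lemma reject_small {D Dy j m : ℕ} (hD : D = 2*m ∨ D = 2*m+1) (hj : j < 2*m)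
    (hDy : Dy = 2*(j/2)) :
    ¬((Even D ∧ D < Dy) ∨ (¬Even D ∧ (D:ℤ)-2 < (Dy:ℤ))) := by
  rw [Nat.even_iff]
  omega

lemma DLBn_update_small {n m j : ℕ} {X : ℕ → Bool}
    (hpre : ∀ i < 2*m, X i = true) (hj : j < 2*m) (hmn : 2*m ≤ n) :
    DLBn n (Function.update X j false) = 2*(j/2) := by
  set Y := Function.update X j false with hY
  have hYj : Y j = false := Function.update_self j false X
  have hYne : ∀ i, i ≠ j → Y i = X i := fun i hi => Function.update_of_ne hi false X
  have hLO : LOn n Y = j := LOn_eq (by omega)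
    (fun i hi => by rw [hYne i (by omega)]; exact hpre i (by omega)) (fun _ => hYj)
  have hne : ¬ ∀ i < n, Y i = true := fun h => by simp [h j (by omega)] at hYj
  rw [DLBn_eval hLO hne]
  rcases Nat.mod_two_eq_zero_or_one j with hp | hp
  · have h1 : Y (2*(j/2)+1) = true := by
      rw [hYne (2*(j/2)+1) (by omega)]; exact hpre _ (by omega)
    simp [h1]
  · have h0 : Y (2*(j/2)) = true := by
      rw [hYne (2*(j/2)) (by omega)]; exact hpre _ (by omega)
    simp [h0]

lemma eval_update_large {n L j : ℕ} {b : Bool} {δ : ℝ} {X : ℕ → Bool}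
    (hpre : ∀ i < L, X i = true) (hXL : X L = false) (hLn : L < n)
    (hj : 2*(L/2)+2 ≤ j) :
    DLBn n (Function.update X j b) = DLBn n X ∧
    HLBn n δ (Function.update X j b) = HLBn n δ X := by
  set Y := Function.update X j b with hY
  have hYe : ∀ i, i ≠ j → Y i = X i := fun i hi => Function.update_of_ne hi b X
  have hLOX : LOn n X = L := LOn_eq hLn.le hpre fun _ => hXL
  have hLOY : LOn n Y = L := LOn_eq hLn.le
    (fun i hi => by rw [hYe i (by omega)]; exact hpre i hi)
    (fun _ => by rw [hYe L (by omega)]; exact hXL)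
  have hneX : ¬ ∀ i < n, X i = true := fun h => by simp [h L hLn] at hXL
  have hneY : ¬ ∀ i < n, Y i = true := fun h => by
    have := h L hLn
    rw [hYe L (by omega)] at this
    simp [this] at hXL
  have e0 : Y (2*(L/2)) = X (2*(L/2)) := hYe _ (by omega)
  have e1 : Y (2*(L/2)+1) = X (2*(L/2)+1) := hYe _ (by omega)
  constructor
  · rw [DLBn_eval hLOY hneY, DLBn_eval hLOX hneX, e0, e1]
  · rw [HLBn_eval hLOY hneY, HLBn_eval hLOX hneX, e0, e1]

lemma DLBn_ge {n m : ℕ} {Y : ℕ → Bool} (h : 2*m+2 ≤ LOn n Y) : 2*m+2 ≤ DLBn n Y := by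
  have hn := LOn_le n Y
  rw [DLBn]
  split_ifs <;> omega

lemma HLBn_ge {n m : ℕ} {Y : ℕ → Bool} (h : 2*m+2 ≤ LOn n Y) :
    ((2*m+2 : ℕ) : ℝ) ≤ HLBn n (3/2) Y := by
  have hn := LOn_le n Y
  have h2 : 2*m+2 ≤ 2*(LOn n Y / 2) := by omega
  rw [HLBn]
  split_ifs
  · exact_mod_cast Nat.le_trans h hn
  · exact_mod_cast h2
  · have : ((2*m+2 : ℕ) : ℝ) ≤ ((2*(LOn n Y/2) : ℕ) : ℝ) := by exact_mod_cast h2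
    push_cast at this ⊢
    linarith

lemma pmf_map_sum {α β : Type*} [Fintype α] [Fintype β] (p : PMF α) (f : α → β) (g : β → ℝ) :
    ∑ b, ((p.map f) b).toReal * g b = ∑ a, (p a).toReal * g (f a) := by
  classical
  have h1 : ∀ b, ((p.map f) b).toReal = ∑ a, (if b = f a then (p a).toReal else 0) := by
    intro b
    rw [PMF.map_apply, tsum_fintype, ENNReal.toReal_sum]
    · congr 1
      funext a
      split_ifs <;> simp
    · intro a _
      split_ifs
      · exact p.apply_ne_top a
      · simp
  simp_rw [h1, Finset.sum_mul, ite_mul, zero_mul]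
  rw [Finset.sum_comm]
  apply Finset.sum_congr rfl
  intro a _
  rw [Finset.sum_ite_eq' Finset.univ (f a) (fun b => (p a).toReal * g b)]
  simp

lemma key (n : ℕ) (he : Even n) (x : Fin n → Bool) (hx : x ≠ fun _ => true)
    (F : Fin n → (Fin n → Bool))
    (hF1 : ∀ i : Fin n,
      ((Even (DLB x) ∧ DLB x < DLB (Function.update x i (!(x i)))) ∨
        (¬ Even (DLB x) ∧ (DLB x : ℤ) - 2 < (DLB (Function.update x i (!(x i))) : ℤ)))
      → F i = Function.update x i (!(x i)))
    (hF2 : ∀ i : Fin n,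
      ¬((Even (DLB x) ∧ DLB x < DLB (Function.update x i (!(x i)))) ∨
        (¬ Even (DLB x) ∧ (DLB x : ℤ) - 2 < (DLB (Function.update x i (!(x i))) : ℤ)))
      → F i = x) :
    (1:ℝ) ≤ ∑ i : Fin n, (HLB (3/2) (F i) - HLB (3/2) x) := by
  classical
  obtain ⟨j0, hj0⟩ : ∃ j : Fin n, x j = false := by
    by_contra h
    push_neg at h
    refine hx (funext fun j => ?_)
    have := h j
    revert this
    cases x j <;> simp
  have hexX : ∃ i, toNatFun x i = false := ⟨(j0 : ℕ), by rw [toNatFun_coe]; exact hj0⟩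
  obtain ⟨L, hXL, hpre, hLn⟩ :
      ∃ L, toNatFun x L = false ∧ (∀ i < L, toNatFun x i = true) ∧ L < n := by
    refine ⟨Nat.find hexX, Nat.find_spec hexX, fun i hi => ?_, ?_⟩
    · have := Nat.find_min hexX hi
      revert this
      cases toNatFun x i <;> simp
    · have h1 : Nat.find hexX ≤ (j0 : ℕ) :=
        Nat.find_le (by rw [toNatFun_coe]; exact hj0)
      exact lt_of_le_of_lt h1 j0.isLt
  have hLOX : LOn n (toNatFun x) = L := LOn_eq hLn.le hpre fun _ => hXL
  have hneX : ¬ ∀ i < n, toNatFun x i = true := fun h => by simp [h L hLn] at hXL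
  have hD : DLB x = 2*(L/2) ∨ DLB x = 2*(L/2)+1 := by
    rw [DLB, DLBn_eval hLOX hneX]
    split_ifs
    · right; rfl
    · left; rfl
  have hpre2 : ∀ i < 2*(L/2), toNatFun x i = true := fun i hi => hpre i (by omega)
  -- all indices outside the critical block contribute zero
  have hzero : ∀ i : Fin n, (i:ℕ) ≠ 2*(L/2) → (i:ℕ) ≠ 2*(L/2)+1 →
      HLB (3/2) (F i) - HLB (3/2) x = 0 := by
    intro i hne0 hne1
    rcases lt_or_ge (i:ℕ) (2*(L/2)) with hlt | hge
    · have hxi : x i = true := by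
        rw [← toNatFun_coe x i]; exact hpre _ (by omega)
      have hupd : toNatFun (Function.update x i (!(x i)))
          = Function.update (toNatFun x) (i:ℕ) false := by
        rw [toNatFun_update, hxi, Bool.not_true]
      have hDy : DLB (Function.update x i (!(x i))) = 2*((i:ℕ)/2) := by
        rw [DLB, hupd]
        exact DLBn_update_small hpre2 hlt (by omega)
      rw [hF2 i (reject_small hD hlt hDy), sub_self]
    · have hj2 : 2*(L/2)+2 ≤ (i:ℕ) := by omega
      obtain ⟨hDeq, hHeq⟩ :=
        eval_update_large (b := !(x i)) (δ := 3/2) hpre hXL hLn hj2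
      have hupd : toNatFun (Function.update x i (!(x i)))
          = Function.update (toNatFun x) (i:ℕ) (!(x i)) := toNatFun_update x i _
      have hH : HLB (3/2) (Function.update x i (!(x i))) = HLB (3/2) x := by
        rw [HLB, hupd, hHeq, HLB]
      by_cases hc : (Even (DLB x) ∧ DLB x < DLB (Function.update x i (!(x i)))) ∨
          (¬ Even (DLB x) ∧ (DLB x : ℤ) - 2 < (DLB (Function.update x i (!(x i))) : ℤ))
      · rw [hF1 i hc, hH, sub_self]
      · rw [hF2 i hc, sub_self]
  rcases Nat.mod_two_eq_zero_or_one L with hp | hp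
  -- ========================= L even ============================
  · obtain ⟨m, rfl⟩ : ∃ m, L = 2*m := ⟨L/2, by omega⟩
    have hdd : (2*m)/2 = m := by omega
    replace hzero := fun (i : Fin n) (h0 : (i:ℕ) ≠ 2*m) (h1 : (i:ℕ) ≠ 2*m+1) =>
      hzero i (by omega) (by omega)
    obtain ⟨t, ht⟩ := he
    have h2m1n : 2*m+1 < n := by omega
    set i0 : Fin n := ⟨2*m, by omega⟩ with hi0
    set i1 : Fin n := ⟨2*m+1, h2m1n⟩ with hi1
    have hxi0 : x i0 = false := by rw [← toNatFun_coe x i0]; exact hXL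
    have hupd0 : toNatFun (Function.update x i0 (!(x i0)))
        = Function.update (toNatFun x) (2*m) true := by
      rw [toNatFun_update, hxi0, Bool.not_false]
    have hxi1v : toNatFun x ((i1 : Fin n) : ℕ) = toNatFun x (2*m+1) := rfl
    cases hb1 : toNatFun x (2*m+1) with
    | false =>
      -- Case A : critical block 00, DLB x = 2m+1
      have hDx : DLB x = 2*m+1 := by
        rw [DLB, DLBn_eval hLOX hneX, hdd, if_pos ⟨hXL, hb1⟩]
      have hHx : HLB (3/2) x = ((2*m : ℕ) : ℝ) := by
        rw [HLB, HLBn_eval hLOX hneX, hdd, if_pos ⟨hXL, hb1⟩]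
      -- flip at 2m
      have hLOY0 : LOn n (Function.update (toNatFun x) (2*m) true) = 2*m+1 := by
        refine LOn_eq (by omega) (fun i hi => ?_) (fun _ => ?_)
        · rcases eq_or_ne i (2*m) with rfl | hne
          · exact Function.update_self _ _ _
          · rw [Function.update_of_ne hne]; exact hpre i (by omega)
        · rw [Function.update_of_ne (by omega)]; exact hb1
      have hneY0 : ¬ ∀ i < n, Function.update (toNatFun x) (2*m) true i = true := by
        intro h
        have h2 := h (2*m+1) h2m1n
        rw [Function.update_of_ne (by omega)] at h2
        rw [h2] at hb1; cases hb1
      have hDy0 : DLB (Function.update x i0 (!(x i0))) = 2*m := by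
        rw [DLB, hupd0, DLBn_eval hLOY0 hneY0, show (2*m+1)/2 = m from by omega,
          if_neg (by simp [Function.update_self])]
      have hHy0 : HLB (3/2) (Function.update x i0 (!(x i0))) = ((2*m : ℕ) : ℝ) + 2 - 3/2 := by
        rw [HLB, hupd0, HLBn_eval hLOY0 hneY0, show (2*m+1)/2 = m from by omega,
          if_neg (by simp [Function.update_self])]
      have hc0 : (Even (DLB x) ∧ DLB x < DLB (Function.update x i0 (!(x i0)))) ∨
          (¬ Even (DLB x) ∧ (DLB x : ℤ) - 2 < (DLB (Function.update x i0 (!(x i0))) : ℤ)) := by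
        right
        constructor
        · rw [hDx, Nat.even_iff]; omega
        · rw [hDx, hDy0]; omega
      -- flip at 2m+1
      have hxi1 : x i1 = false := by rw [← toNatFun_coe x i1]; exact hb1
      have hupd1 : toNatFun (Function.update x i1 (!(x i1)))
          = Function.update (toNatFun x) (2*m+1) true := by
        rw [toNatFun_update, hxi1, Bool.not_false]
      have hLOY1 : LOn n (Function.update (toNatFun x) (2*m+1) true) = 2*m := by
        refine LOn_eq (by omega) (fun i hi => ?_) (fun _ => ?_)
        · rw [Function.update_of_ne (by omega)]; exact hpre i hi
        · rw [Function.update_of_ne (by omega)]; exact hXL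
      have hneY1 : ¬ ∀ i < n, Function.update (toNatFun x) (2*m+1) true i = true := by
        intro h
        have h2 := h (2*m) (by omega)
        rw [Function.update_of_ne (by omega)] at h2
        rw [h2] at hXL; cases hXL
      have hDy1 : DLB (Function.update x i1 (!(x i1))) = 2*m := by
        rw [DLB, hupd1, DLBn_eval hLOY1 hneY1, hdd,
          if_neg (by simp [Function.update_self])]
      have hHy1 : HLB (3/2) (Function.update x i1 (!(x i1))) = ((2*m : ℕ) : ℝ) + 2 - 3/2 := by
        rw [HLB, hupd1, HLBn_eval hLOY1 hneY1, hdd,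
          if_neg (by simp [Function.update_self])]
      have hc1 : (Even (DLB x) ∧ DLB x < DLB (Function.update x i1 (!(x i1)))) ∨
          (¬ Even (DLB x) ∧ (DLB x : ℤ) - 2 < (DLB (Function.update x i1 (!(x i1))) : ℤ)) := by
        right
        constructor
        · rw [hDx, Nat.even_iff]; omega
        · rw [hDx, hDy1]; omega
      have h01 : i0 ≠ i1 := by
        intro h
        have := congrArg Fin.val h
        simp [hi0, hi1] at this
      calc (1:ℝ) ≤ (HLB (3/2) (F i0) - HLB (3/2) x) + (HLB (3/2) (F i1) - HLB (3/2) x) := by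
            rw [hF1 i0 hc0, hF1 i1 hc1, hHy0, hHy1, hHx]
            push_cast
            linarith
      _ = ∑ i ∈ ({i0, i1} : Finset (Fin n)), (HLB (3/2) (F i) - HLB (3/2) x) := by
            rw [Finset.sum_pair h01]
      _ = ∑ i : Fin n, (HLB (3/2) (F i) - HLB (3/2) x) := by
            refine Finset.sum_subset (Finset.subset_univ _) (fun i _ hi => ?_)
            rw [Finset.mem_insert, Finset.mem_singleton] at hi
            push_neg at hi
            exact hzero i (fun h => hi.1 (Fin.ext h)) (fun h => hi.2 (Fin.ext h))
    | true =>
      -- Case B1 : critical block 01, DLB x = 2m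
      have hDx : DLB x = 2*m := by
        rw [DLB, DLBn_eval hLOX hneX, hdd, if_neg (by simp [hb1])]
      have hHx : HLB (3/2) x = ((2*m : ℕ) : ℝ) + 2 - 3/2 := by
        rw [HLB, HLBn_eval hLOX hneX, hdd, if_neg (by simp [hb1])]
      -- flip at 2m : block becomes 11, big gain
      have hLOge : 2*m+2 ≤ LOn n (Function.update (toNatFun x) (2*m) true) := by
        refine LOn_ge (by omega) (fun i hi => ?_)
        rcases eq_or_ne i (2*m) with rfl | hne
        · exact Function.update_self _ _ _
        · rcases eq_or_ne i (2*m+1) with rfl | hne1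
          · rw [Function.update_of_ne (by omega)]; exact hb1
          · rw [Function.update_of_ne hne]; exact hpre i (by omega)
      have hDge : 2*m+2 ≤ DLB (Function.update x i0 (!(x i0))) := by
        rw [DLB, hupd0]; exact DLBn_ge hLOge
      have hHge : ((2*m+2 : ℕ) : ℝ) ≤ HLB (3/2) (Function.update x i0 (!(x i0))) := by
        rw [HLB, hupd0]; exact HLBn_ge hLOge
      have hc0 : (Even (DLB x) ∧ DLB x < DLB (Function.update x i0 (!(x i0)))) ∨
          (¬ Even (DLB x) ∧ (DLB x : ℤ) - 2 < (DLB (Function.update x i0 (!(x i0))) : ℤ)) := by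
        left
        exact ⟨by rw [hDx]; exact even_two_mul m, by rw [hDx]; omega⟩
      -- flip at 2m+1 : block becomes 00, small loss
      have hxi1 : x i1 = true := by rw [← toNatFun_coe x i1]; exact hb1
      have hupd1 : toNatFun (Function.update x i1 (!(x i1)))
          = Function.update (toNatFun x) (2*m+1) false := by
        rw [toNatFun_update, hxi1, Bool.not_true]
      have hLOY1 : LOn n (Function.update (toNatFun x) (2*m+1) false) = 2*m := by
        refine LOn_eq (by omega) (fun i hi => ?_) (fun _ => ?_)
        · rw [Function.update_of_ne (by omega)]; exact hpre i hi
        · rw [Function.update_of_ne (by omega)]; exact hXL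
      have hneY1 : ¬ ∀ i < n, Function.update (toNatFun x) (2*m+1) false i = true := by
        intro h
        have h2 := h (2*m) (by omega)
        rw [Function.update_of_ne (by omega)] at h2
        rw [h2] at hXL; cases hXL
      have hb00 : Function.update (toNatFun x) (2*m+1) false (2*m) = false := by
        rw [Function.update_of_ne (by omega)]; exact hXL
      have hDy1 : DLB (Function.update x i1 (!(x i1))) = 2*m+1 := by
        rw [DLB, hupd1, DLBn_eval hLOY1 hneY1, hdd,
          if_pos ⟨hb00, Function.update_self _ _ _⟩]
      have hHy1 : HLB (3/2) (Function.update x i1 (!(x i1))) = ((2*m : ℕ) : ℝ) := by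
        rw [HLB, hupd1, HLBn_eval hLOY1 hneY1, hdd,
          if_pos ⟨hb00, Function.update_self _ _ _⟩]
      have hc1 : (Even (DLB x) ∧ DLB x < DLB (Function.update x i1 (!(x i1)))) ∨
          (¬ Even (DLB x) ∧ (DLB x : ℤ) - 2 < (DLB (Function.update x i1 (!(x i1))) : ℤ)) := by
        left
        exact ⟨by rw [hDx]; exact even_two_mul m, by rw [hDx, hDy1]; omega⟩
      have h01 : i0 ≠ i1 := by
        intro h
        have := congrArg Fin.val h
        simp [hi0, hi1] at this
      calc (1:ℝ) ≤ (HLB (3/2) (F i0) - HLB (3/2) x) + (HLB (3/2) (F i1) - HLB (3/2) x) := by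
            rw [hF1 i0 hc0, hF1 i1 hc1, hHy1, hHx]
            push_cast at hHge ⊢
            linarith
      _ = ∑ i ∈ ({i0, i1} : Finset (Fin n)), (HLB (3/2) (F i) - HLB (3/2) x) := by
            rw [Finset.sum_pair h01]
      _ = ∑ i : Fin n, (HLB (3/2) (F i) - HLB (3/2) x) := by
            refine Finset.sum_subset (Finset.subset_univ _) (fun i _ hi => ?_)
            rw [Finset.mem_insert, Finset.mem_singleton] at hi
            push_neg at hi
            exact hzero i (fun h => hi.1 (Fin.ext h)) (fun h => hi.2 (Fin.ext h))
  -- ========================= L odd ============================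
  · obtain ⟨m, rfl⟩ : ∃ m, L = 2*m+1 := ⟨L/2, by omega⟩
    have hdd : (2*m+1)/2 = m := by omega
    replace hzero := fun (i : Fin n) (h0 : (i:ℕ) ≠ 2*m) (h1 : (i:ℕ) ≠ 2*m+1) =>
      hzero i (by omega) (by omega)
    have hb0 : toNatFun x (2*m) = true := hpre (2*m) (by omega)
    set i0 : Fin n := ⟨2*m, by omega⟩ with hi0
    set i1 : Fin n := ⟨2*m+1, hLn⟩ with hi1
    have hDx : DLB x = 2*m := by
      rw [DLB, DLBn_eval hLOX hneX, hdd, if_neg (by simp [hb0])]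
    have hHx : HLB (3/2) x = ((2*m : ℕ) : ℝ) + 2 - 3/2 := by
      rw [HLB, HLBn_eval hLOX hneX, hdd, if_neg (by simp [hb0])]
    -- flip at 2m : block becomes 00, small loss
    have hxi0 : x i0 = true := by rw [← toNatFun_coe x i0]; exact hb0
    have hupd0 : toNatFun (Function.update x i0 (!(x i0)))
        = Function.update (toNatFun x) (2*m) false := by
      rw [toNatFun_update, hxi0, Bool.not_true]
    have hLOY0 : LOn n (Function.update (toNatFun x) (2*m) false) = 2*m := by
      refine LOn_eq (by omega) (fun i hi => ?_) (fun _ => Function.update_self _ _ _)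
      rw [Function.update_of_ne (by omega)]; exact hpre i (by omega)
    have hneY0 : ¬ ∀ i < n, Function.update (toNatFun x) (2*m) false i = true := by
      intro h
      have h2 := h (2*m) (by omega)
      rw [Function.update_self] at h2; cases h2
    have hb01 : Function.update (toNatFun x) (2*m) false (2*m+1) = false := by
      rw [Function.update_of_ne (by omega)]; exact hXL
    have hDy0 : DLB (Function.update x i0 (!(x i0))) = 2*m+1 := by
      rw [DLB, hupd0, DLBn_eval hLOY0 hneY0, show (2*m)/2 = m from by omega,
        if_pos ⟨Function.update_self _ _ _, hb01⟩]
    have hHy0 : HLB (3/2) (Function.update x i0 (!(x i0))) = ((2*m : ℕ) : ℝ) := by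
      rw [HLB, hupd0, HLBn_eval hLOY0 hneY0, show (2*m)/2 = m from by omega,
        if_pos ⟨Function.update_self _ _ _, hb01⟩]
    have hc0 : (Even (DLB x) ∧ DLB x < DLB (Function.update x i0 (!(x i0)))) ∨
        (¬ Even (DLB x) ∧ (DLB x : ℤ) - 2 < (DLB (Function.update x i0 (!(x i0))) : ℤ)) := by
      left
      exact ⟨by rw [hDx]; exact even_two_mul m, by rw [hDx, hDy0]; omega⟩
    -- flip at 2m+1 : block becomes 11, big gain
    have hxi1 : x i1 = false := by rw [← toNatFun_coe x i1]; exact hXL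
    have hupd1 : toNatFun (Function.update x i1 (!(x i1)))
        = Function.update (toNatFun x) (2*m+1) true := by
      rw [toNatFun_update, hxi1, Bool.not_false]
    have hLOge : 2*m+2 ≤ LOn n (Function.update (toNatFun x) (2*m+1) true) := by
      refine LOn_ge (by omega) (fun i hi => ?_)
      rcases eq_or_ne i (2*m+1) with rfl | hne
      · exact Function.update_self _ _ _
      · rw [Function.update_of_ne hne]; exact hpre i (by omega)
    have hDge : 2*m+2 ≤ DLB (Function.update x i1 (!(x i1))) := by
      rw [DLB, hupd1]; exact DLBn_ge hLOge
    have hHge : ((2*m+2 : ℕ) : ℝ) ≤ HLB (3/2) (Function.update x i1 (!(x i1))) := by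
      rw [HLB, hupd1]; exact HLBn_ge hLOge
    have hc1 : (Even (DLB x) ∧ DLB x < DLB (Function.update x i1 (!(x i1)))) ∨
        (¬ Even (DLB x) ∧ (DLB x : ℤ) - 2 < (DLB (Function.update x i1 (!(x i1))) : ℤ)) := by
      left
      exact ⟨by rw [hDx]; exact even_two_mul m, by rw [hDx]; omega⟩
    have h01 : i0 ≠ i1 := by
      intro h
      have := congrArg Fin.val h
      simp [hi0, hi1] at this
    calc (1:ℝ) ≤ (HLB (3/2) (F i0) - HLB (3/2) x) + (HLB (3/2) (F i1) - HLB (3/2) x) := by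
          rw [hF1 i0 hc0, hF1 i1 hc1, hHy0, hHx]
          push_cast at hHge ⊢
          linarith
    _ = ∑ i ∈ ({i0, i1} : Finset (Fin n)), (HLB (3/2) (F i) - HLB (3/2) x) := by
          rw [Finset.sum_pair h01]
    _ = ∑ i : Fin n, (HLB (3/2) (F i) - HLB (3/2) x) := by
          refine Finset.sum_subset (Finset.subset_univ _) (fun i _ hi => ?_)
          rw [Finset.mem_insert, Finset.mem_singleton] at hi
          push_neg at hi
          exact hzero i (fun h => hi.1 (Fin.ext h)) (fun h => hi.2 (Fin.ext h))

end Aux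

/-- **One-step drift of the single-bit-flip non-elitist algorithm on DLB.** Let
`n` be an even positive integer. For every non-optimal `x ∈ {0,1}^n`, the
expected one-step gain in `HLB_{3/2}` of the single-bit-flip non-elitist
algorithm started at `x` is at least `1/n`. -/
theorem single_bit_flip_one_step_drift (n : ℕ) [NeZero n] (he : Even n)
    (x : Fin n → Bool) (hx : x ≠ fun _ => true) :
    (1 : ℝ) / n ≤
      ∑ x' : Fin n → Bool, ((sbfStep n x) x').toReal *
        (HLB (3 / 2) x' - HLB (3 / 2) x) := by
  classical
  have hn : 0 < n := Nat.pos_of_ne_zero (NeZero.ne n)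
  rw [sbfStep]
  rw [pmf_map_sum (PMF.uniformOfFintype (Fin n)) _ (fun x' => HLB (3 / 2) x' - HLB (3 / 2) x)]
  have hu : ∀ i : Fin n, ((PMF.uniformOfFintype (Fin n)) i).toReal = 1 / (n : ℝ) := by
    intro i
    rw [PMF.uniformOfFintype_apply]
    simp [ENNReal.toReal_inv]
  simp only [hu]
  rw [← Finset.mul_sum]
  have h1 := key n he x hx
    (fun i => if (Even (DLB x) ∧ DLB x < DLB (Function.update x i (!(x i)))) ∨
        (¬ Even (DLB x) ∧ (DLB x : ℤ) - 2 < (DLB (Function.update x i (!(x i))) : ℤ))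
      then Function.update x i (!(x i)) else x)
    (fun i h => if_pos h) (fun i h => if_neg h)
  have hnpos : (0:ℝ) < 1 / (n : ℝ) := by positivity
  calc (1:ℝ) / n = (1 / (n:ℝ)) * 1 := (mul_one _).symm
  _ ≤ _ := mul_le_mul_of_nonneg_left h1 hnpos.le
end

section
/- Let n be an even positive integer and m an integer with n/4 < m < n/3. Let x ∈ {0,1}^n and let ℓ := |{j ∈ [1..2m+2] : x_j = 1}| be the number of ones among the first 2m+2 bits of x, and suppose 1 ≤ ℓ ≤ 2m+1. Then for every unary unbiased variation operator V, Pr[LO(V(x)) ≥ 2m+2] ≤ 2/n. -/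
/-- A unary variation operator `V` (assigning to each bit string a distribution on
bit strings) is *unbiased* if it is invariant under XOR with any fixed string and
under permutations of the bit positions. -/
def IsUnbiased {n : ℕ} (V : (Fin n → Bool) → PMF (Fin n → Bool)) : Prop :=
  (∀ x z y : Fin n → Bool,
      V x y = V (fun i => xor (x i) (z i)) (fun i => xor (y i) (z i))) ∧
  (∀ (x : Fin n → Bool) (σ : Equiv.Perm (Fin n)) (y : Fin n → Bool),
      V x y = V (x ∘ σ) (y ∘ σ))


-- choose lower bound
lemma le_choose_aux (a : ℕ) : ∀ z, 1 ≤ z → z < a → a ≤ a.choose z := by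
  induction a with
  | zero => intro z h1 h2; omega
  | succ a ih =>
    intro z h1 h2
    match z, h1 with
    | w + 1, _ =>
      rw [Nat.choose_succ_succ]
      rcases Nat.eq_zero_or_pos w with hw | hw
      · subst hw; simp
      · rcases eq_or_lt_of_le (show w + 1 ≤ a by omega) with he | hlt
        · subst he
          have h01 : (w + 1).choose w = w + 1 := by
            have := Nat.choose_symm (show 1 ≤ w + 1 by omega)
            simpa using this
          rw [h01, Nat.choose_self]
        · have h1' := ih w hw (by omega)
          have h2' := ih (w + 1) (by omega) hlt
          simp only [Nat.succ_eq_add_one]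
          omega

-- prefix characterization of LO
lemma LO_ge_iff {n a : ℕ} (ha : a ≤ n) (y : Fin n → Bool) :
    a ≤ LO y ↔ ∀ i : Fin n, (i : ℕ) < a → y i = true := by
  unfold LO LOn
  constructor
  · intro h i hi
    by_contra hyi
    have hyi' : y i = false := by simpa using hyi
    have hsub : ((Finset.range n).filter (fun r => ∀ s ≤ r, toNatFun y s = true))
        ⊆ Finset.range (i : ℕ) := by
      intro r hr
      rw [Finset.mem_filter, Finset.mem_range] at hr
      rw [Finset.mem_range]
      by_contra hri
      push_neg at hri
      have := hr.2 (i : ℕ) hri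
      rw [toNatFun] at this
      rw [dif_pos i.isLt] at this
      simp [Fin.eta] at this
      rw [this] at hyi'
      simp at hyi'
    have := Finset.card_le_card hsub
    rw [Finset.card_range] at this
    omega
  · intro h
    have hsub : Finset.range a ⊆
        ((Finset.range n).filter (fun r => ∀ s ≤ r, toNatFun y s = true)) := by
      intro r hr
      rw [Finset.mem_range] at hr
      rw [Finset.mem_filter, Finset.mem_range]
      refine ⟨by omega, fun s hs => ?_⟩
      have hsn : s < n := by omega
      rw [toNatFun, dif_pos hsn]
      exact h ⟨s, hsn⟩ (by simpa using by omega)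
    have := Finset.card_le_card hsub
    rwa [Finset.card_range] at this

-- flip set
def flipSet {n : ℕ} (x y : Fin n → Bool) : Finset (Fin n) :=
  Finset.univ.filter (fun i => y i ≠ x i)

lemma flipSet_inj {n : ℕ} (x : Fin n → Bool) {y y' : Fin n → Bool}
    (h : flipSet x y = flipSet x y') : y = y' := by
  funext i
  have := Finset.ext_iff.mp h i
  simp only [flipSet, Finset.mem_filter, Finset.mem_univ, true_and] at this
  revert this
  cases hx : x i <;> cases hy : y i <;> cases hy' : y' i <;> simp

lemma exists_perm_of_card_eq {n : ℕ} (s t : Finset (Fin n)) (h : s.card = t.card) :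
    ∃ σ : Equiv.Perm (Fin n), ∀ i, σ i ∈ s ↔ i ∈ t := by
  classical
  have h' : (t : Finset (Fin n)).card = s.card := h.symm
  have hc : (tᶜ : Finset (Fin n)).card = (sᶜ : Finset (Fin n)).card := by
    rw [Finset.card_compl, Finset.card_compl, h]
  let e1 : {i : Fin n // i ∈ t} ≃ {i : Fin n // i ∈ s} := Finset.equivOfCardEq h'
  let e2 : {i : Fin n // ¬ i ∈ t} ≃ {i : Fin n // ¬ i ∈ s} :=
    ((Equiv.subtypeEquivRight (fun i => (Finset.mem_compl).symm)).trans
      (Finset.equivOfCardEq hc)).trans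
      (Equiv.subtypeEquivRight (fun i => Finset.mem_compl))
  refine ⟨Equiv.subtypeCongr e1 e2, fun i => ?_⟩
  by_cases hi : i ∈ t
  · simp only [Equiv.subtypeCongr, Equiv.trans_apply, Equiv.sumCompl_symm_apply_of_pos hi,
      Equiv.sumCongr_apply, Sum.map_inl, Equiv.sumCompl_apply_inl]
    exact iff_of_true (e1 ⟨i, hi⟩).2 hi
  · simp only [Equiv.subtypeCongr, Equiv.trans_apply, Equiv.sumCompl_symm_apply_of_neg hi,
      Equiv.sumCongr_apply, Sum.map_inr, Equiv.sumCompl_apply_inr]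
    exact iff_of_false (e2 ⟨i, hi⟩).2 hi

lemma unbiased_const {n : ℕ} {V : (Fin n → Bool) → PMF (Fin n → Bool)}
    (hV : IsUnbiased V) (x y y' : Fin n → Bool)
    (h : (flipSet x y).card = (flipSet x y').card) : V x y = V x y' := by
  obtain ⟨σ, hσ⟩ := exists_perm_of_card_eq (flipSet x y) (flipSet x y') h
  have key : ∀ i, xor (y (σ i)) (x (σ i)) = xor (y' i) (x i) := by
    intro i
    have h1 := hσ i
    simp only [flipSet, Finset.mem_filter, Finset.mem_univ, true_and] at h1
    revert h1
    cases hx : x i <;> cases hy' : y' i <;> cases hx2 : x (σ i) <;> cases hy2 : y (σ i) <;> simp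
  have e1 : V x y = V (fun _ => false) (fun i => xor (y i) (x i)) := by
    have := hV.1 x x y
    simpa using this
  have e1' : V x y' = V (fun _ => false) (fun i => xor (y' i) (x i)) := by
    have := hV.1 x x y'
    simpa using this
  have e2 := hV.2 (fun _ => false) σ (fun i => xor (y i) (x i))
  rw [e1, e1', e2]
  congr 1
  funext i
  exact key i
/-- **Improvement probability bound for LeadingOnes under unary unbiased
variation.** Let `n` be even and positive and `m` an integer with
`n/4 < m < n/3`. Let `x ∈ {0,1}^n` and let `ℓ` be the number of ones among the
first `2m+2` bits of `x`, and suppose `1 ≤ ℓ ≤ 2m+1`. Then for every unary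
unbiased variation operator `V`, `Pr[LO(V(x)) ≥ 2m+2] ≤ 2/n`. -/
theorem prob_LO_improvement_le (n m : ℕ) (hn : 0 < n) (he : Even n)
    (hm1 : n < 4 * m) (hm2 : 3 * m < n)
    (x : Fin n → Bool) (ℓ : ℕ)
    (hℓ : ℓ = ((Finset.univ : Finset (Fin n)).filter
      (fun j : Fin n => ((j : ℕ) < 2 * m + 2 ∧ x j = true))).card)
    (hℓ1 : 1 ≤ ℓ) (hℓ2 : ℓ ≤ 2 * m + 1)
    (V : (Fin n → Bool) → PMF (Fin n → Bool)) (hV : IsUnbiased V) :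
    (∑ y : Fin n → Bool, if 2 * m + 2 ≤ LO y then ((V x) y).toReal else 0)
      ≤ 2 / n := by
  classical
  set a : ℕ := 2 * m + 2 with ha_def
  have hm : 2 ≤ m := by omega
  have han : a ≤ n := by omega
  set Afin : Finset (Fin n) := Finset.univ.filter (fun j : Fin n => (j : ℕ) < a) with hAfin
  set Zset : Finset (Fin n) := Finset.univ.filter
    (fun j : Fin n => (j : ℕ) < a ∧ x j = false) with hZset
  set z : ℕ := a - ℓ with hz_def
  have hz1 : 1 ≤ z := by omega
  have hz2 : z < a := by omega
  -- card of Afin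
  have hAcard : Afin.card = a := by
    have himg : Afin.image (Fin.val) = Finset.range a := by
      ext v
      simp only [Finset.mem_image, Finset.mem_range, hAfin, Finset.mem_filter,
        Finset.mem_univ, true_and]
      constructor
      · rintro ⟨j, hj, rfl⟩; exact hj
      · intro hv; exact ⟨⟨v, lt_of_lt_of_le hv han⟩, hv, rfl⟩
    have h2 := Finset.card_image_of_injective Afin (Fin.val_injective)
    rw [himg, Finset.card_range] at h2
    omega
  have hAccard : (Afinᶜ).card = n - a := by
    rw [Finset.card_compl, hAcard, Fintype.card_fin]
  -- card of Zset
  have hZcard : Zset.card = z := by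
    have hsplit := Finset.card_filter_add_card_filter_not
      (s := Afin) (p := fun j => x j = true)
    have h1 : Afin.filter (fun j => x j = true)
        = Finset.univ.filter (fun j : Fin n => (j : ℕ) < a ∧ x j = true) := by
      rw [hAfin, Finset.filter_filter]
    have h2 : Afin.filter (fun j => ¬ (x j = true)) = Zset := by
      rw [hAfin, Finset.filter_filter, hZset]
      ext j
      simp [Bool.not_eq_true]
    rw [h1, h2, hAcard, ← hℓ] at hsplit
    omega
  -- flips within A of a good string
  have hflipA : ∀ y : Fin n → Bool, (∀ i : Fin n, (i : ℕ) < a → y i = true) →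
      flipSet x y ∩ Afin = Zset := by
    intro y hy
    ext i
    simp only [flipSet, Finset.mem_inter, Finset.mem_filter, Finset.mem_univ, true_and,
      hAfin, hZset]
    constructor
    · rintro ⟨hne, hia⟩
      refine ⟨hia, ?_⟩
      rw [hy i hia] at hne
      cases hxi : x i
      · rfl
      · exact absurd hxi.symm hne
    · rintro ⟨hia, hxi⟩
      refine ⟨?_, hia⟩
      rw [hy i hia, hxi]
      simp
  -- the event as a finset
  set E : Finset (Fin n → Bool) := Finset.univ.filter
    (fun y => ∀ i : Fin n, (i : ℕ) < a → y i = true) with hE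
  have hEventEq : (∑ y : Fin n → Bool, if a ≤ LO y then ((V x) y).toReal else 0)
      = ∑ y ∈ E, ((V x) y).toReal := by
    rw [hE, Finset.sum_filter]
    exact Finset.sum_congr rfl (fun y _ => if_congr (LO_ge_iff han y) rfl rfl)
  -- total probability
  have hpsum : ∑ y : Fin n → Bool, ((V x) y).toReal = 1 := by
    have h := (V x).tsum_coe
    rw [tsum_fintype] at h
    rw [← ENNReal.toReal_sum (fun y _ => PMF.apply_ne_top (V x) y), h, ENNReal.toReal_one]
  -- fiberwise decompositions
  have hmaps : ∀ y ∈ E, (flipSet x y).card ∈ Finset.range (n + 1) := by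
    intro y _
    rw [Finset.mem_range]
    have h2 := Finset.card_le_univ (flipSet x y)
    rw [Fintype.card_fin] at h2
    omega
  have hmaps' : ∀ y ∈ (Finset.univ : Finset (Fin n → Bool)),
      (flipSet x y).card ∈ Finset.range (n + 1) := fun y _ => by
    rw [Finset.mem_range]
    have h2 := Finset.card_le_univ (flipSet x y)
    rw [Fintype.card_fin] at h2
    omega
  have hfib := Finset.sum_fiberwise_of_maps_to hmaps (fun y => ((V x) y).toReal)
  have hfib' := Finset.sum_fiberwise_of_maps_to hmaps' (fun y => ((V x) y).toReal)
  -- key per-fiber bound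
  have key : ∀ k ∈ Finset.range (n + 1),
      (∑ y ∈ E.filter (fun y => (flipSet x y).card = k), ((V x) y).toReal)
        ≤ 2 / n * ∑ y ∈ Finset.univ.filter
            (fun y : Fin n → Bool => (flipSet x y).card = k), ((V x) y).toReal := by
    intro k hk
    rw [Finset.mem_range] at hk
    set S := E.filter (fun y => (flipSet x y).card = k) with hS
    set B := Finset.univ.filter
      (fun y : Fin n → Bool => (flipSet x y).card = k) with hB
    rcases S.eq_empty_or_nonempty with hSe | ⟨y₀, hy₀⟩
    · rw [hSe, Finset.sum_empty]
      have h1 : (0:ℝ) ≤ ∑ y ∈ B, ((V x) y).toReal :=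
        Finset.sum_nonneg (fun y _ => ENNReal.toReal_nonneg)
      have h2 : (0:ℝ) ≤ 2 / n := by positivity
      exact mul_nonneg h2 h1
    · have hy₀' : y₀ ∈ E ∧ (flipSet x y₀).card = k := by
        rw [hS, Finset.mem_filter] at hy₀; exact hy₀
      have hy₀E : ∀ i : Fin n, (i : ℕ) < a → y₀ i = true := by
        have := hy₀'.1
        rw [hE, Finset.mem_filter] at this
        exact this.2
      have hzk : z ≤ k := by
        have h1 : flipSet x y₀ ∩ Afin = Zset := hflipA y₀ hy₀E
        have h2 := Finset.card_le_card
          (Finset.inter_subset_left (s₁ := flipSet x y₀) (s₂ := Afin))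
        rw [h1, hZcard, hy₀'.2] at h2
        exact h2
      -- upper bound on S.card
      have hup : S.card ≤ (n - a).choose (k - z) := by
        have hmem : ∀ y ∈ S, flipSet x y \ Afin ∈ Finset.powersetCard (k - z) Afinᶜ := by
          intro y hy
          rw [hS, Finset.mem_filter] at hy
          obtain ⟨hyE, hyk⟩ := hy
          rw [hE, Finset.mem_filter] at hyE
          have hZA : flipSet x y ∩ Afin = Zset := hflipA y hyE.2
          rw [Finset.mem_powersetCard]
          constructor
          · intro i hi
            rw [Finset.mem_sdiff] at hi
            rw [Finset.mem_compl]
            exact hi.2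
          · have h3 := Finset.card_inter_add_card_sdiff (flipSet x y) Afin
            rw [hZA, hZcard, hyk] at h3
            omega
        have hinj : Set.InjOn (fun y => flipSet x y \ Afin) S := by
          intro y hy y' hy' heq
          simp only at heq
          rw [Finset.mem_coe] at hy hy'
          rw [hS, Finset.mem_filter] at hy hy'
          have hyE : y ∈ E := hy.1
          have hy'E : y' ∈ E := hy'.1
          rw [hE, Finset.mem_filter] at hyE hy'E
          have d1 : flipSet x y ∩ Afin = Zset := hflipA y hyE.2
          have d2 : flipSet x y' ∩ Afin = Zset := hflipA y' hy'E.2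
          apply flipSet_inj x
          have udec : ∀ s : Finset (Fin n), s ∩ Afin ∪ s \ Afin = s := by
            intro s
            ext i
            simp only [Finset.mem_union, Finset.mem_inter, Finset.mem_sdiff]
            tauto
          have u1 := udec (flipSet x y)
          have u2 := udec (flipSet x y')
          rw [← u1, ← u2, d1, d2, heq]
        have h4 := Finset.card_le_card_of_injOn _ hmem hinj
        rwa [Finset.card_powersetCard, hAccard] at h4
      -- lower bound on B.card
      have hlow : a.choose z * ((n - a).choose (k - z)) ≤ B.card := by
        set D := (Afin.powersetCard z) ×ˢ (Afinᶜ.powersetCard (k - z)) with hD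
        have hmem : ∀ P ∈ D, (fun i => xor (x i) (decide (i ∈ P.1 ∪ P.2))) ∈ B := by
          rintro ⟨Z1, T1⟩ hP
          rw [hD, Finset.mem_product, Finset.mem_powersetCard, Finset.mem_powersetCard] at hP
          obtain ⟨⟨hZsub, hZc⟩, hTsub, hTc⟩ := hP
          rw [hB, Finset.mem_filter]
          refine ⟨Finset.mem_univ _, ?_⟩
          have hflip : flipSet x (fun i => xor (x i) (decide (i ∈ Z1 ∪ T1))) = Z1 ∪ T1 := by
            ext i
            simp only [flipSet, Finset.mem_filter, Finset.mem_univ, true_and]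
            cases hxi : x i <;> by_cases hi : i ∈ Z1 ∪ T1 <;> simp [hxi, hi]
          rw [hflip]
          have hdisj : Disjoint Z1 T1 := by
            apply Finset.disjoint_left.mpr
            intro i hi1 hi2
            have := hTsub hi2
            rw [Finset.mem_compl] at this
            exact this (hZsub hi1)
          rw [Finset.card_union_of_disjoint hdisj, hZc, hTc]
          omega
        have hinj : Set.InjOn (fun P : Finset (Fin n) × Finset (Fin n) =>
            (fun i => xor (x i) (decide (i ∈ P.1 ∪ P.2)))) D := by
          rintro ⟨Z1, T1⟩ h1 ⟨Z2, T2⟩ h2 heq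
          rw [Finset.mem_coe] at h1 h2
          rw [hD, Finset.mem_product, Finset.mem_powersetCard, Finset.mem_powersetCard] at h1 h2
          simp only at heq
          have hu : Z1 ∪ T1 = Z2 ∪ T2 := by
            ext i
            have hb := congrFun heq i
            have hd : (decide (i ∈ Z1 ∪ T1)) = (decide (i ∈ Z2 ∪ T2)) := by
              cases hxi : x i <;> rw [hxi] at hb
              · simpa only [Bool.false_xor] using hb
              · simp only [Bool.true_xor] at hb
                exact Bool.not_inj hb
            exact decide_eq_decide.mp hd
          have e1 : ∀ (Zi Ti : Finset (Fin n)), Zi ⊆ Afin → Ti ⊆ Afinᶜ →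
              Zi = (Zi ∪ Ti) ∩ Afin := by
            intro Zi Ti hZ hT
            ext i
            simp only [Finset.mem_inter, Finset.mem_union]
            constructor
            · intro h; exact ⟨Or.inl h, hZ h⟩
            · rintro ⟨h | h, hA⟩
              · exact h
              · have := hT h
                rw [Finset.mem_compl] at this
                exact absurd hA this
          have e2 : ∀ (Zi Ti : Finset (Fin n)), Zi ⊆ Afin → Ti ⊆ Afinᶜ →
              Ti = (Zi ∪ Ti) ∩ Afinᶜ := by
            intro Zi Ti hZ hT
            ext i
            simp only [Finset.mem_inter, Finset.mem_union]
            constructor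
            · intro h; exact ⟨Or.inr h, hT h⟩
            · rintro ⟨h | h, hA⟩
              · rw [Finset.mem_compl] at hA
                exact absurd (hZ h) hA
              · exact h
          have hZ12 : Z1 = Z2 := by
            rw [e1 Z1 T1 h1.1.1 h1.2.1, e1 Z2 T2 h2.1.1 h2.2.1, hu]
          have hT12 : T1 = T2 := by
            rw [e2 Z1 T1 h1.1.1 h1.2.1, e2 Z2 T2 h2.1.1 h2.2.1, hu]
          exact Prod.ext hZ12 hT12
        have h4 := Finset.card_le_card_of_injOn _ hmem hinj
        rwa [hD, Finset.card_product, Finset.card_powersetCard, Finset.card_powersetCard,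
          hAcard, hAccard] at h4
      -- combine cardinalities
      have hcards : n * S.card ≤ 2 * B.card := by
        have c1 : a ≤ a.choose z := le_choose_aux a z hz1 hz2
        have c2 : n ≤ 2 * a := by omega
        calc n * S.card ≤ (2 * a) * ((n - a).choose (k - z)) :=
              Nat.mul_le_mul c2 hup
          _ = 2 * (a * ((n - a).choose (k - z))) := by ring
          _ ≤ 2 * (a.choose z * ((n - a).choose (k - z))) :=
              Nat.mul_le_mul_left 2 (Nat.mul_le_mul_right _ c1)
          _ ≤ 2 * B.card := Nat.mul_le_mul_left 2 hlow
      -- p is constant on B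
      have hSB : S ⊆ B := by
        intro y hy
        rw [hS, Finset.mem_filter] at hy
        rw [hB, Finset.mem_filter]
        exact ⟨Finset.mem_univ _, hy.2⟩
      have hconst : ∀ y ∈ B, ((V x) y).toReal = ((V x) y₀).toReal := by
        intro y hy
        rw [hB, Finset.mem_filter] at hy
        rw [unbiased_const hV x y y₀ (by rw [hy.2, hy₀'.2])]
      have hSsum : ∑ y ∈ S, ((V x) y).toReal = (S.card : ℝ) * ((V x) y₀).toReal := by
        rw [Finset.sum_congr rfl (fun y hy => hconst y (hSB hy)), Finset.sum_const,
          nsmul_eq_mul]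
      have hBsum : ∑ y ∈ B, ((V x) y).toReal = (B.card : ℝ) * ((V x) y₀).toReal := by
        rw [Finset.sum_congr rfl (fun y hy => hconst y hy), Finset.sum_const, nsmul_eq_mul]
      rw [hSsum, hBsum]
      have hnn : (0:ℝ) ≤ ((V x) y₀).toReal := ENNReal.toReal_nonneg
      have hnpos : (0:ℝ) < n := by exact_mod_cast hn
      rw [div_mul_eq_mul_div, le_div_iff₀ hnpos]
      have hc : (n : ℝ) * S.card ≤ 2 * B.card := by exact_mod_cast hcards
      nlinarith [mul_le_mul_of_nonneg_right hc hnn]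
  -- assemble
  rw [hEventEq, ← hfib]
  calc (∑ k ∈ Finset.range (n + 1),
        ∑ y ∈ E.filter (fun y => (flipSet x y).card = k), ((V x) y).toReal)
      ≤ ∑ k ∈ Finset.range (n + 1), 2 / n * ∑ y ∈ Finset.univ.filter
          (fun y : Fin n → Bool => (flipSet x y).card = k), ((V x) y).toReal :=
        Finset.sum_le_sum key
    _ = 2 / n * ∑ k ∈ Finset.range (n + 1), ∑ y ∈ Finset.univ.filter
          (fun y : Fin n → Bool => (flipSet x y).card = k), ((V x) y).toReal :=
        (Finset.mul_sum _ _ _).symm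
    _ = 2 / n * ∑ y : Fin n → Bool, ((V x) y).toReal := by rw [hfib']
    _ = 2 / n := by rw [hpsum, mul_one]
end

section
/- Binomial coefficient inequality underlying the even-DLB-value drift bound: Let n ≥ 2 and m be integers with n/4 ≤ m ≤ n/2 − 1. Then for every integer r with 1 ≤ r ≤ n, one has n·C(n−2m−2, r−1) ≤ C(n, r), where C(a,b) denotes the binomial coefficient 'a choose b' (equal to 0 when b > a). -/
lemma binom_aux (n k : ℕ) (hkn : 2 * k + 4 ≤ n) :
    ∀ r : ℕ, 1 ≤ r → r ≤ n → n * Nat.choose k (r - 1) ≤ Nat.choose n r := by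
  intro r
  induction r with
  | zero => omega
  | succ r ih =>
    intro _ hrn
    rcases Nat.eq_zero_or_pos r with h0 | hr
    · subst h0
      simp [Nat.choose_one_right]
    · by_cases hrk : r ≤ k
      · have ih' := ih hr (by omega)
        have h1 : Nat.choose k r * r = Nat.choose k (r - 1) * (k - (r - 1)) := by
          have := Nat.choose_succ_right_eq k (r - 1)
          rwa [show r - 1 + 1 = r from by omega] at this
        have h2 : Nat.choose n (r + 1) * (r + 1) = Nat.choose n r * (n - r) :=
          Nat.choose_succ_right_eq n r
        have key : (k - (r - 1)) * (r + 1) ≤ (n - r) * r := by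
          obtain ⟨a, ha⟩ : ∃ a, k - (r - 1) = a + 1 := ⟨k - r, by omega⟩
          obtain ⟨c, hc⟩ : ∃ c, n - r = r + 2 * a + 2 + c := ⟨n - r - (r + 2*a+2), by omega⟩
          rw [ha, hc]
          nlinarith
        have hpos : 0 < r * (r + 1) := by positivity
        have main : n * Nat.choose k r * (r * (r + 1)) ≤
            Nat.choose n (r + 1) * (r * (r + 1)) := by
          calc n * Nat.choose k r * (r * (r + 1))
              = n * (Nat.choose k r * r) * (r + 1) := by ring
            _ = n * (Nat.choose k (r - 1) * (k - (r - 1))) * (r + 1) := by rw [h1]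
            _ = (n * Nat.choose k (r - 1)) * ((k - (r - 1)) * (r + 1)) := by ring
            _ ≤ Nat.choose n r * ((n - r) * r) := Nat.mul_le_mul ih' key
            _ = (Nat.choose n r * (n - r)) * r := by ring
            _ = (Nat.choose n (r + 1) * (r + 1)) * r := by rw [h2]
            _ = Nat.choose n (r + 1) * (r * (r + 1)) := by ring
        exact Nat.le_of_mul_le_mul_right main hpos
      · simp [Nat.choose_eq_zero_of_lt (show k < r by omega)]

/-- **Binomial coefficient inequality underlying the even-DLB-value drift
bound.** Let `n ≥ 2` and `m` be integers with `n/4 ≤ m ≤ n/2 - 1` (equivalently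
`n ≤ 4m` and `2m + 2 ≤ n`). Then for every integer `r` with `1 ≤ r ≤ n`,
`n · C(n - 2m - 2, r - 1) ≤ C(n, r)`; equivalently, the probability
`D_r = C(n-2m-2, r-1)/C(n,r)` is at most `D_1 = 1/n`. -/
theorem binom_ineq_even_case (n m : ℕ) (hn : 2 ≤ n)
    (hm1 : n ≤ 4 * m) (hm2 : 2 * m + 2 ≤ n) :
    ∀ r : ℕ, 1 ≤ r → r ≤ n →
      n * Nat.choose (n - 2 * m - 2) (r - 1) ≤ Nat.choose n r := by
  exact binom_aux n (n - 2 * m - 2) (by omega)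
end

section
/- Binomial coefficient inequality underlying the local-optimum drift bound: Let n ≥ 2 and m be integers with n ≤ 3m and m ≤ n/2 − 1. Then for every integer r with 2 ≤ r ≤ n − 2m, one has C(n,2)·C(n−2m−2, r−2) ≤ C(n, r), where C(a,b) denotes the binomial coefficient 'a choose b' (equal to 0 when b > a). -/
lemma binom_ineq_local_opt_aux (n m : ℕ) (hm1 : n ≤ 3 * m) (hm2 : 2 * m + 2 ≤ n) :
    ∀ s : ℕ, s + 2 ≤ n - 2 * m →
      Nat.choose n 2 * Nat.choose (n - 2 * m - 2) s ≤ Nat.choose n (s + 2) := by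
  intro s
  induction s with
  | zero => intro _; simp
  | succ s ih =>
    intro h
    have ih' := ih (by omega)
    set k := n - 2 * m - 2 with hk
    have h1 : Nat.choose k (s + 1) * (s + 1) = Nat.choose k s * (k - s) :=
      Nat.choose_succ_right_eq k s
    have h2 : Nat.choose n (s + 3) * (s + 3) = Nat.choose n (s + 2) * (n - (s + 2)) :=
      Nat.choose_succ_right_eq n (s + 2)
    have ha : k - s ≤ m := by omega
    have hb : n - (s + 2) = (k - s) + 2 * m := by omega
    have key : (k - s) * (s + 3) ≤ (n - (s + 2)) * (s + 1) := by
      rw [hb]; nlinarith [Nat.zero_le (k - s), Nat.zero_le s]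
    have main : (Nat.choose n 2 * Nat.choose k (s + 1)) * ((s + 1) * (s + 3))
        ≤ Nat.choose n (s + 3) * ((s + 1) * (s + 3)) := by
      calc (Nat.choose n 2 * Nat.choose k (s + 1)) * ((s + 1) * (s + 3))
          = Nat.choose n 2 * (Nat.choose k (s + 1) * (s + 1)) * (s + 3) := by ring
        _ = Nat.choose n 2 * (Nat.choose k s * (k - s)) * (s + 3) := by rw [h1]
        _ = (Nat.choose n 2 * Nat.choose k s) * ((k - s) * (s + 3)) := by ring
        _ ≤ Nat.choose n (s + 2) * ((n - (s + 2)) * (s + 1)) := Nat.mul_le_mul ih' key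
        _ = (Nat.choose n (s + 2) * (n - (s + 2))) * (s + 1) := by ring
        _ = Nat.choose n (s + 3) * (s + 3) * (s + 1) := by rw [h2]
        _ = Nat.choose n (s + 3) * ((s + 1) * (s + 3)) := by ring
    exact Nat.le_of_mul_le_mul_right main (by positivity)

/-- **Binomial coefficient inequality underlying the local-optimum drift
bound.** Let `n ≥ 2` and `m` be integers with `n ≤ 3m` and `m ≤ n/2 - 1`
(equivalently `2m + 2 ≤ n`). Then for every integer `r` with `2 ≤ r ≤ n - 2m`,
`C(n,2) · C(n - 2m - 2, r - 2) ≤ C(n, r)`; equivalently, the probability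
`E_r = C(n-2m-2, r-2)/C(n,r)` is at most `E_2 = 1/C(n,2)`. -/
theorem binom_ineq_local_opt_case (n m : ℕ) (hn : 2 ≤ n)
    (hm1 : n ≤ 3 * m) (hm2 : 2 * m + 2 ≤ n) :
    ∀ r : ℕ, 2 ≤ r → r ≤ n - 2 * m →
      Nat.choose n 2 * Nat.choose (n - 2 * m - 2) (r - 2) ≤ Nat.choose n r := by
  intro r hr2 hrn
  obtain ⟨s, rfl⟩ : ∃ s, r = s + 2 := ⟨r - 2, by omega⟩
  simpa using binom_ineq_local_opt_aux n m hm1 hm2 s (by omega)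
end

section
/- Binomial coefficient inequality underlying the unary unbiased lower bound: Let n be an even positive integer and m an integer with n/4 < m < n/3. Let ℓ and r be integers with 1 ≤ ℓ ≤ 2m+1 and 2m+2−ℓ ≤ r ≤ n−ℓ. Then n·C(n−2m−2, r−(2m+2−ℓ)) ≤ 2·C(n, r), where C(a,b) denotes the binomial coefficient 'a choose b'. -/
lemma choose_one_le_aux {N k : ℕ} (h1 : 1 ≤ k) (h2 : k ≤ N / 2) :
    N.choose 1 ≤ N.choose k := by
  induction k with
  | zero => omega
  | succ j ih =>
    rcases Nat.eq_or_lt_of_le h1 with h | h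
    · rw [← h]
    · have hj : 1 ≤ j := by omega
      exact (ih hj (by omega)).trans (Nat.choose_le_succ_of_lt_half_left (by omega))

lemma le_choose_aux_s14 {N k : ℕ} (h1 : 1 ≤ k) (h2 : k < N) : N ≤ N.choose k := by
  rcases le_or_gt k (N / 2) with h | h
  · have := choose_one_le_aux h1 h
    rwa [Nat.choose_one_right] at this
  · have hs : N.choose (N - k) = N.choose k := Nat.choose_symm (le_of_lt h2)
    rw [← hs]
    have := choose_one_le_aux (N := N) (k := N - k) (by omega) (by omega)
    rwa [Nat.choose_one_right] at this

/-- **Binomial coefficient inequality underlying the unary unbiased lower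
bound.** Let `n` be an even positive integer and `m` an integer with
`n/4 < m < n/3` (equivalently `n < 4m` and `3m < n`). Let `ℓ` and `r` be
integers with `1 ≤ ℓ ≤ 2m+1` and `2m+2-ℓ ≤ r ≤ n-ℓ`. Then
`n · C(n - 2m - 2, r - (2m + 2 - ℓ)) ≤ 2 · C(n, r)`; equivalently, the
probability `D_ℓ(r) = C(n-2m-2, r-(2m+2-ℓ))/C(n,r)` is at most `2/n`. -/
theorem binom_ineq_unary_lower_bound (n m : ℕ) (hn : 0 < n) (he : Even n)
    (hm1 : n < 4 * m) (hm2 : 3 * m < n)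
    (ℓ r : ℕ) (hℓ1 : 1 ≤ ℓ) (hℓ2 : ℓ ≤ 2 * m + 1)
    (hr1 : 2 * m + 2 - ℓ ≤ r) (hr2 : r ≤ n - ℓ) :
    n * Nat.choose (n - 2 * m - 2) (r - (2 * m + 2 - ℓ)) ≤ 2 * Nat.choose n r := by
  set k := 2 * m + 2 - ℓ with hk
  have hm : 1 ≤ m := by omega
  have hk1 : 1 ≤ k := by omega
  have hk2 : k < 2 * m + 2 := by omega
  have hnb : 2 * m + 2 + (n - 2 * m - 2) = n := by omega
  have hterm : (2 * m + 2).choose k * (n - 2 * m - 2).choose (r - k) ≤ n.choose r := by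
    have hv := Nat.add_choose_eq (2 * m + 2) (n - 2 * m - 2) r
    rw [hnb] at hv
    rw [hv]
    refine Finset.single_le_sum (f := fun ij : ℕ × ℕ =>
      (2 * m + 2).choose ij.1 * (n - 2 * m - 2).choose ij.2)
      (a := (k, r - k)) (fun i _ => Nat.zero_le _) ?_
    rw [Finset.HasAntidiagonal.mem_antidiagonal]
    omega
  have hle : n ≤ 2 * (2 * m + 2).choose k := by
    have := le_choose_aux_s14 hk1 hk2
    omega
  calc n * (n - 2 * m - 2).choose (r - k)
      ≤ (2 * (2 * m + 2).choose k) * (n - 2 * m - 2).choose (r - k) :=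
        Nat.mul_le_mul_right _ hle
    _ = 2 * ((2 * m + 2).choose k * (n - 2 * m - 2).choose (r - k)) := by ring
    _ ≤ 2 * n.choose r := Nat.mul_le_mul_left _ hterm
end

section
/- Let n ≥ 2 be an integer and define p(a,b) := a(−b² + 3b + (b² − 3b + 1)a). Then for all a, b ∈ {1/2, 1 − 1/n}, one has p(a,b) ≥ (1 + 1/(4n))·a ≥ a; moreover, if a = 1/2 and b ∈ {1/2, 1 − 1/n}, then p(a,b) ≥ (9/8)·a = 9/16. -/
/-- Let `n ≥ 2` be an integer and `p(a,b) := a·(-b² + 3b + (b² - 3b + 1)·a)`.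
For all `a, b ∈ {1/2, 1 - 1/n}` one has `p(a,b) ≥ (1 + 1/(4n))·a ≥ a`;
moreover, if `a = 1/2` and `b ∈ {1/2, 1 - 1/n}`, then
`p(a,b) ≥ (9/8)·a = 9/16`. -/
theorem winner_probability_lower_bounds (n : ℕ) (hn : 2 ≤ n) (a b : ℝ)
    (ha : a = 1 / 2 ∨ a = 1 - 1 / n) (hb : b = 1 / 2 ∨ b = 1 - 1 / n) :
    ((1 + 1 / (4 * (n : ℝ))) * a ≤
        a * (-b ^ 2 + 3 * b + (b ^ 2 - 3 * b + 1) * a)) ∧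
    (a ≤ (1 + 1 / (4 * (n : ℝ))) * a) ∧
    (a = 1 / 2 →
      (9 / 8) * a ≤ a * (-b ^ 2 + 3 * b + (b ^ 2 - 3 * b + 1) * a) ∧
      (9 / 8) * a = 9 / 16) := by
  have hn' : (2:ℝ) ≤ (n:ℝ) := by exact_mod_cast hn
  have hnpos : (0:ℝ) < (n:ℝ) := by linarith
  have hx : (0:ℝ) < 1 / (n:ℝ) := by positivity
  have hx2 : (1:ℝ) / (n:ℝ) ≤ 1 / 2 := by
    rw [div_le_div_iff₀ hnpos (by norm_num)]; linarith
  have h4 : (1:ℝ) / (4 * (n:ℝ)) = (1 / (n:ℝ)) / 4 := by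
    field_simp
  rcases ha with ha | ha <;> rcases hb with hb | hb <;>
    subst ha <;> subst hb <;>
    refine ⟨by nlinarith [sq_nonneg (1/(n:ℝ)), sq_nonneg (1/(n:ℝ) - 1/2), mul_pos hx hx], by nlinarith [sq_nonneg (1/(n:ℝ))], fun h => ⟨by nlinarith [sq_nonneg (1/(n:ℝ)), sq_nonneg (1/(n:ℝ) - 1/2)], by rw [h]; norm_num⟩⟩
end
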